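/- (Chung–Erdős inequality) Let (Ω, A, μ) be a finite measure space and (E_n)_{n≥1} measurable sets with Σ_{n=1}^∞ μ(E_n) = ∞. Then μ(limsup_n E_n) ≥ limsup_{Q→∞} (Σ_{s=1}^Q μ(E_s))² / (Σ_{s,t=1}^Q μ(E_s ∩ E_t)). -/

import Mathlib

open Filter MeasureTheory Topology
open scoped ENNReal NNReal

section ChungErdosAux
open Set

lemma chung_erdos_key {Ω : Type*} [MeasurableSpace Ω] (μ : Measure Ω)
    (E : ℕ → Set Ω) (hE : ∀ n, MeasurableSet (E n)) (F : Finset ℕ) :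
    (∑ s ∈ F, μ (E s)) ^ 2 ≤ μ (⋃ s ∈ F, E s) * ∑ s ∈ F, ∑ t ∈ F, μ (E s ∩ E t) := by
  set f : Ω → ℝ≥0∞ := fun ω => ∑ s ∈ F, (E s).indicator 1 ω with hf
  set U : Set Ω := ⋃ s ∈ F, E s with hUdef
  have hU : MeasurableSet U := F.measurableSet_biUnion (fun s _ => hE s)
  have hfm : Measurable f := by
    apply Finset.measurable_sum
    intro s _
    exact measurable_one.indicator (hE s)
  have hgm : Measurable (U.indicator (1 : Ω → ℝ≥0∞)) := measurable_one.indicator hU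
  have hfg : ∀ ω, f ω * U.indicator 1 ω = f ω := by
    intro ω
    by_cases hω : ω ∈ U
    · simp [indicator_of_mem hω]
    · have h0 : f ω = 0 := by
        apply Finset.sum_eq_zero
        intro s hs
        have : ω ∉ E s := fun h => hω (mem_biUnion hs h)
        simp [indicator_of_notMem this]
      simp [h0]
  have hint : ∫⁻ ω, f ω ∂μ = ∑ s ∈ F, μ (E s) := by
    rw [lintegral_finset_sum _ (fun s _ => measurable_one.indicator (hE s))]
    exact Finset.sum_congr rfl fun s _ => lintegral_indicator_one (hE s)
  have hsq : ∫⁻ ω, f ω * f ω ∂μ = ∑ s ∈ F, ∑ t ∈ F, μ (E s ∩ E t) := by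
    have hexp : ∀ ω, f ω * f ω = ∑ s ∈ F, ∑ t ∈ F, (E s ∩ E t).indicator 1 ω := by
      intro ω
      rw [hf]
      simp only
      rw [Finset.sum_mul_sum]
      refine Finset.sum_congr rfl fun s _ => Finset.sum_congr rfl fun t _ => ?_
      by_cases hs : ω ∈ E s <;> by_cases ht : ω ∈ E t <;>
        simp [indicator, hs, ht, Set.mem_inter_iff]
    simp_rw [hexp]
    rw [lintegral_finset_sum _ (fun s _ => Finset.measurable_sum _ fun t _ =>
      measurable_one.indicator ((hE s).inter (hE t)))]
    refine Finset.sum_congr rfl fun s _ => ?_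
    rw [lintegral_finset_sum _ (fun t _ => measurable_one.indicator ((hE s).inter (hE t)))]
    exact Finset.sum_congr rfl fun t _ => lintegral_indicator_one ((hE s).inter (hE t))
  have hpq : Real.HolderConjugate 2 2 := ⟨by norm_num, by norm_num, by norm_num⟩
  have hH := ENNReal.lintegral_mul_le_Lp_mul_Lq μ hpq hfm.aemeasurable hgm.aemeasurable
  have h1 : ∫⁻ ω, f ω * U.indicator 1 ω ∂μ = ∑ s ∈ F, μ (E s) := by
    rw [← hint]; exact lintegral_congr hfg
  have h2 : ∫⁻ ω, f ω ^ (2:ℝ) ∂μ = ∑ s ∈ F, ∑ t ∈ F, μ (E s ∩ E t) := by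
    rw [← hsq]
    refine lintegral_congr fun ω => ?_
    rw [show (2:ℝ) = ((2:ℕ):ℝ) by norm_num, ENNReal.rpow_natCast, sq]
  have h3 : ∫⁻ ω, (U.indicator (1 : Ω → ℝ≥0∞)) ω ^ (2:ℝ) ∂μ = μ U := by
    rw [← lintegral_indicator_one hU]
    refine lintegral_congr fun ω => ?_
    by_cases hω : ω ∈ U <;> simp [hω, ENNReal.zero_rpow_of_pos, indicator]
  simp only [Pi.mul_apply] at hH
  rw [h1, h2, h3] at hH
  calc (∑ s ∈ F, μ (E s)) ^ 2
      ≤ ((∑ s ∈ F, ∑ t ∈ F, μ (E s ∩ E t)) ^ (1/2:ℝ) * μ U ^ (1/2:ℝ)) ^ 2 :=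
        pow_le_pow_left' hH 2
    _ = μ U * ∑ s ∈ F, ∑ t ∈ F, μ (E s ∩ E t) := by
        rw [mul_pow, ← ENNReal.rpow_natCast (_ ^ (1/2:ℝ)), ← ENNReal.rpow_natCast (μ U ^ (1/2:ℝ)),
          ← ENNReal.rpow_mul, ← ENNReal.rpow_mul]
        norm_num [mul_comm]

lemma chung_erdos_real' {Ω : Type*} [MeasurableSpace Ω] (μ : Measure Ω) [IsFiniteMeasure μ]
    (E : ℕ → Set Ω) (hE : ∀ n, MeasurableSet (E n)) (N Q : ℕ) :
    (∑ s ∈ Finset.Icc N Q, (μ (E s)).toReal) ^ 2 /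
      (∑ s ∈ Finset.Icc N Q, ∑ t ∈ Finset.Icc N Q, (μ (E s ∩ E t)).toReal)
      ≤ (μ (⋃ n, ⋃ (_ : N ≤ n), E n)).toReal := by
  have key := chung_erdos_key μ E hE (Finset.Icc N Q)
  have hUsub : μ (⋃ s ∈ Finset.Icc N Q, E s) ≤ μ (⋃ n, ⋃ (_ : N ≤ n), E n) := by
    apply measure_mono
    refine iUnion₂_subset fun s hs => ?_
    exact subset_iUnion₂ (s := fun n (_ : N ≤ n) => E n) s (Finset.mem_Icc.mp hs).1
  have key2 : (∑ s ∈ Finset.Icc N Q, μ (E s)) ^ 2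
      ≤ μ (⋃ n, ⋃ (_ : N ≤ n), E n) * ∑ s ∈ Finset.Icc N Q, ∑ t ∈ Finset.Icc N Q, μ (E s ∩ E t) :=
    key.trans (mul_le_mul_left hUsub _)
  set a := ∑ s ∈ Finset.Icc N Q, μ (E s)
  set b := ∑ s ∈ Finset.Icc N Q, ∑ t ∈ Finset.Icc N Q, μ (E s ∩ E t)
  have ha : a ≠ ⊤ := ENNReal.sum_ne_top.mpr fun s _ => measure_ne_top μ _
  have hb : b ≠ ⊤ := by
    refine ENNReal.sum_ne_top.mpr fun s _ => ENNReal.sum_ne_top.mpr fun t _ => measure_ne_top μ _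
  have hreal : a.toReal ^ 2 ≤ (μ (⋃ n, ⋃ (_ : N ≤ n), E n)).toReal * b.toReal := by
    rw [← ENNReal.toReal_pow, ← ENNReal.toReal_mul]
    exact ENNReal.toReal_mono (ENNReal.mul_ne_top (measure_ne_top μ _) hb) key2
  have hav : (∑ s ∈ Finset.Icc N Q, (μ (E s)).toReal) = a.toReal :=
    (ENNReal.toReal_sum fun s _ => measure_ne_top μ _).symm
  have hbv : (∑ s ∈ Finset.Icc N Q, ∑ t ∈ Finset.Icc N Q, (μ (E s ∩ E t)).toReal) = b.toReal := by
    rw [ENNReal.toReal_sum fun s _ => ENNReal.sum_ne_top.mpr fun t _ => measure_ne_top μ _]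
    exact Finset.sum_congr rfl fun s _ => (ENNReal.toReal_sum fun t _ => measure_ne_top μ _).symm
  rw [hav, hbv]
  rcases eq_or_lt_of_le (ENNReal.toReal_nonneg : (0:ℝ) ≤ b.toReal) with hb0 | hb0
  · rw [← hb0, div_zero]; exact ENNReal.toReal_nonneg
  · rw [div_le_iff₀ hb0]; exact hreal

end ChungErdosAux

/-- Chung–Erdős inequality: if `(Ω, μ)` is a finite measure space and
`(Eₙ)` are measurable sets with `Σ μ(Eₙ) = ∞`, then
`μ(limsup Eₙ) ≥ limsup_Q (Σ_{s≤Q} μ(Eₛ))² / (Σ_{s,t≤Q} μ(Eₛ ∩ Eₜ))`. -/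
theorem chung_erdos {Ω : Type*} [MeasurableSpace Ω] (μ : Measure Ω) [IsFiniteMeasure μ]
    (E : ℕ → Set Ω) (hE : ∀ n, MeasurableSet (E n))
    (hdiv : ∑' n : ℕ, μ (E n) = ⊤) :
    Filter.limsup (fun Q : ℕ =>
        (∑ s ∈ Finset.Icc 1 Q, (μ (E s)).toReal) ^ 2 /
          ∑ s ∈ Finset.Icc 1 Q, ∑ t ∈ Finset.Icc 1 Q, (μ (E s ∩ E t)).toReal) atTop
      ≤ (μ (Filter.limsup E atTop)).toReal := by
  classical
  set g : ℕ → ℝ := fun n => (μ (E n)).toReal with hgdef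
  set aa : ℕ → ℕ → ℝ := fun N Q => ∑ s ∈ Finset.Icc N Q, g s with haadef
  set b : ℕ → ℕ → ℝ := fun N Q =>
    ∑ s ∈ Finset.Icc N Q, ∑ t ∈ Finset.Icc N Q, (μ (E s ∩ E t)).toReal with hbdef
  set f : ℕ → ℕ → ℝ := fun N Q => (aa N Q) ^ 2 / b N Q with hfdef
  set T : ℕ → Set Ω := fun N => ⋃ n, ⋃ (_ : N ≤ n), E n with hTdef
  show limsup (f 1) atTop ≤ (μ (limsup E atTop)).toReal
  -- basic facts
  have hg0 : ∀ n, 0 ≤ g n := fun n => ENNReal.toReal_nonneg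
  have hfT : ∀ N Q, f N Q ≤ (μ (T N)).toReal := fun N Q => chung_erdos_real' μ E hE N Q
  have hf0 : ∀ N Q, 0 ≤ f N Q := fun N Q => div_nonneg (sq_nonneg _) (Finset.sum_nonneg
    fun s _ => Finset.sum_nonneg fun t _ => ENNReal.toReal_nonneg)
  -- divergence of partial sums
  have hnsum : ¬ Summable g := by
    intro hs
    have h1 : ∀ n, μ (E n) = ((μ (E n)).toNNReal : ℝ≥0∞) := fun n =>
      (ENNReal.coe_toNNReal (measure_ne_top μ _)).symm
    have h2 : Summable (fun n => (μ (E n)).toNNReal) := by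
      rw [← NNReal.summable_coe]; exact hs
    have := ENNReal.tsum_coe_ne_top_iff_summable.mpr h2
    apply this
    rw [← hdiv]
    exact (tsum_congr fun n => (h1 n).symm)
  have hrange : Tendsto (fun n => ∑ i ∈ Finset.range n, g i) atTop atTop :=
    (not_summable_iff_tendsto_nat_atTop_of_nonneg hg0).mp hnsum
  have haN : ∀ N, Tendsto (aa N) atTop atTop := by
    intro N
    have heq : ∀ᶠ Q in atTop, (∑ i ∈ Finset.range (Q+1), g i) - (∑ i ∈ Finset.range N, g i)
        = aa N Q := by
      filter_upwards [eventually_ge_atTop N] with Q hQ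
      rw [haadef]
      simp only
      have : Finset.Icc N Q = Finset.Ico N (Q+1) := by
        ext x; simp [Nat.lt_succ_iff]
      rw [this, Finset.sum_Ico_eq_sub _ (by omega)]
    refine Tendsto.congr' heq ?_
    exact tendsto_atTop_add_const_right _ _ (hrange.comp (tendsto_add_atTop_nat 1))
  -- diagonal bound : aa N Q ≤ b N Q
  have hab : ∀ N Q, aa N Q ≤ b N Q := by
    intro N Q
    refine Finset.sum_le_sum fun s hs => ?_
    have : g s = (μ (E s ∩ E s)).toReal := by rw [Set.inter_self]
    rw [this]
    exact Finset.single_le_sum (f := fun t => (μ (E s ∩ E t)).toReal) (fun t _ => ENNReal.toReal_nonneg) hs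
  -- monotonicity of b in starting index
  have hbmono : ∀ N Q, 1 ≤ N → b N Q ≤ b 1 Q := by
    intro N Q hN
    have hsub : Finset.Icc N Q ⊆ Finset.Icc 1 Q := by
      intro x; simp only [Finset.mem_Icc]; omega
    refine Finset.sum_le_sum_of_subset_of_nonneg hsub ?_ |>.trans ?_
    · intro s _ _; exact Finset.sum_nonneg fun t _ => ENNReal.toReal_nonneg
    · refine Finset.sum_le_sum fun s _ => Finset.sum_le_sum_of_subset_of_nonneg hsub
        fun t _ _ => ENNReal.toReal_nonneg
  -- main claim
  have hclaim : ∀ N, 1 ≤ N → limsup (f 1) atTop ≤ (μ (T N)).toReal := by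
    intro N hN
    set D := (μ (T N)).toReal with hDdef
    have hD0 : 0 ≤ D := ENNReal.toReal_nonneg
    set c := ∑ s ∈ Finset.Icc 1 (N-1), g s with hcdef
    have hc0 : 0 ≤ c := Finset.sum_nonneg fun s _ => hg0 s
    have hsplit : ∀ Q, N ≤ Q → aa 1 Q = c + aa N Q := by
      intro Q hQ
      rw [haadef, hcdef]
      simp only
      have h1 : Finset.Icc 1 (N-1) = Finset.Ico 1 N := by ext x; simp [Finset.mem_Icc]; omega
      have h2 : Finset.Icc N Q = Finset.Ico N (Q+1) := by ext x; simp [Nat.lt_succ_iff]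
      have h3 : Finset.Icc 1 Q = Finset.Ico 1 (Q+1) := by ext x; simp [Nat.lt_succ_iff]
      rw [h1, h2, h3, ← Finset.sum_Ico_consecutive _ (by omega : 1 ≤ N) (by omega : N ≤ Q+1)]
    have hkey : ∀ ε : ℝ, 0 < ε → limsup (f 1) atTop ≤ D + ε := by
      intro ε hε
      have hdiv0 : Tendsto (fun Q => c / aa N Q) atTop (𝓝 0) :=
        tendsto_const_nhds.div_atTop (haN N)
      have hmul : Tendsto (fun Q => (1 + c / aa N Q)^2 * D) atTop (𝓝 D) := by
        have : Tendsto (fun Q => (1 + c / aa N Q)^2) atTop (𝓝 1) := by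
          have h := ((tendsto_const_nhds (x := (1:ℝ))).add hdiv0).pow 2
          simpa using h
        have := this.mul (tendsto_const_nhds (x := D))
        simpa using this
      have hev : ∀ᶠ Q in atTop, (1 + c / aa N Q)^2 * D < D + ε :=
        hmul.eventually_lt_const (by linarith)
      refine limsup_le_of_le (isCoboundedUnder_le_of_le atTop (hf0 1)) ?_
      filter_upwards [hev, (haN N).eventually_ge_atTop 1, eventually_ge_atTop N] with Q h1 h2 h3
      have haQ : 0 < aa N Q := by linarith
      have hbQ : 0 < b N Q := lt_of_lt_of_le haQ (hab N Q)
      have step1 : f 1 Q ≤ (aa 1 Q)^2 / b N Q := by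
        rw [hfdef]
        exact div_le_div_of_nonneg_left (sq_nonneg _) hbQ (hbmono N Q hN)
      have step2 : (aa 1 Q)^2 / b N Q = (1 + c / aa N Q)^2 * f N Q := by
        rw [hsplit Q h3, hfdef]
        simp only
        rw [← mul_div_assoc, ← mul_pow]
        congr 2
        field_simp
        ring
      have step3 : (1 + c / aa N Q)^2 * f N Q ≤ (1 + c / aa N Q)^2 * D :=
        mul_le_mul_of_nonneg_left (hfT N Q) (sq_nonneg _)
      calc f 1 Q ≤ (1 + c / aa N Q)^2 * f N Q := step1.trans_eq step2
        _ ≤ (1 + c / aa N Q)^2 * D := step3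
        _ ≤ D + ε := le_of_lt h1
    by_contra hcon
    push_neg at hcon
    have := hkey ((limsup (f 1) atTop - D)/2) (by linarith)
    linarith
  -- conclusion via continuity from above
  have hTmeas : ∀ N, NullMeasurableSet (T N) μ := fun N =>
    (MeasurableSet.iUnion fun n => MeasurableSet.iUnion fun _ => hE n).nullMeasurableSet
  have hTanti : Antitone T := by
    intro m n hmn
    refine Set.iUnion₂_subset fun k hk => Set.subset_iUnion₂ (s := fun i (_ : m ≤ i) => E i) k (hmn.trans hk)
  have htel : Tendsto (fun N => μ (T N)) atTop (𝓝 (μ (⋂ N, T N))) :=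
    tendsto_measure_iInter_atTop hTmeas hTanti ⟨0, measure_ne_top μ _⟩
  have hlimsup_eq : (⋂ N, T N) = limsup E atTop := by
    rw [limsup_eq_iInf_iSup_of_nat]
    rfl
  have htoReal : Tendsto (fun N => (μ (T N)).toReal) atTop (𝓝 (μ (limsup E atTop)).toReal) := by
    rw [← hlimsup_eq]
    exact (ENNReal.tendsto_toReal (measure_ne_top μ _)).comp htel
  refine ge_of_tendsto htoReal ?_
  filter_upwards [eventually_ge_atTop 1] with N hN using hclaim N hN
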